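/- Adaptive sequential composition for alpha differential privacy: if mechanism M₁ is (α, ε₁)-ADP and M₂ (which may depend on the output of M₁) is (α, ε₂)-ADP, then the composed mechanism (X, Y) with X ~ M₁(D) and Y ~ M₂(X, D) satisfies (α, ε₁ + ε₂ + α(α−1)ε₁ε₂)-ADP. -/

import Mathlib

open MeasureTheory ProbabilityTheory
open scoped ENNReal

lemma ADP_sup_min_rpow (α : ℝ) (hα1 : 1 ≤ α) (x : ℝ≥0∞) :
    ⨆ n : ℕ, (min x n) ^ α = x ^ α := by
  have hα0 : (0:ℝ) < α := lt_of_lt_of_le zero_lt_one hα1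
  rcases eq_or_ne x ∞ with hx | hx
  · subst hx
    simp only [min_eq_right (le_top : (_ : ℝ≥0∞) ≤ ⊤)]
    rw [ENNReal.top_rpow_of_pos hα0, eq_top_iff]
    have hle : ∀ n : ℕ, (n : ℝ≥0∞) ≤ (n : ℝ≥0∞) ^ α := by
      intro n
      rcases Nat.eq_zero_or_pos n with hn | hn
      · simp [hn]
      · have h1 : (1 : ℝ≥0∞) ≤ (n : ℝ≥0∞) := by exact_mod_cast hn
        calc (n : ℝ≥0∞) = (n : ℝ≥0∞) ^ (1 : ℝ) := (ENNReal.rpow_one _).symm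
          _ ≤ (n : ℝ≥0∞) ^ α := ENNReal.rpow_le_rpow_of_exponent_le h1 hα1
    calc (⊤ : ℝ≥0∞) = ⨆ n : ℕ, (n : ℝ≥0∞) := ENNReal.iSup_natCast.symm
      _ ≤ ⨆ n : ℕ, (n : ℝ≥0∞) ^ α := iSup_mono hle
  · obtain ⟨n, hn⟩ := ENNReal.exists_nat_gt hx.lt_top.ne
    refine le_antisymm (iSup_le fun m => ENNReal.rpow_le_rpow (min_le_left _ _) hα0.le) ?_
    exact le_iSup_of_le n (le_of_eq (by rw [min_eq_left hn.le]))

lemma ADP_cancel {α q : ℝ} (hpq : α.HolderConjugate q) {I K : ℝ≥0∞} (hI : I ≠ ∞)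
    (h : I ≤ K ^ (1/α) * I ^ (1/q)) : I ≤ K := by
  rcases eq_or_ne I 0 with h0 | h0
  · simp [h0]
  have hα0 := hpq.pos
  have hq0 := hpq.symm.pos
  have hIq_ne0 : I ^ (1/q) ≠ 0 := by
    simp [ENNReal.rpow_eq_zero_iff, h0, hI, (by positivity : (0:ℝ) < 1/q), hq0.le]
  have hIq_netop : I ^ (1/q) ≠ ∞ := ENNReal.rpow_ne_top_of_nonneg (by positivity) hI
  have hsplit : I = I ^ (1/α) * I ^ (1/q) := by
    rw [← ENNReal.rpow_add _ _ h0 hI]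
    rw [show 1/α + 1/q = 1 by simpa [one_div] using hpq.inv_add_inv_eq_inv, ENNReal.rpow_one]
  nth_rewrite 1 [hsplit] at h
  have h2 : I ^ (1/α) ≤ K ^ (1/α) :=
    (ENNReal.mul_le_mul_iff_left hIq_ne0 hIq_netop).mp h
  have := (ENNReal.rpow_le_rpow_iff (by positivity : (0:ℝ) < 1/α)).mp h2
  exact this

lemma ADP_key {A B : Type*} [MeasurableSpace A] [MeasurableSpace B]
    (μ ν : Measure A) [IsProbabilityMeasure μ] [IsProbabilityMeasure ν]
    (κ κ' : Kernel A B) [IsMarkovKernel κ] [IsMarkovKernel κ']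
    (α : ℝ) (hα : 1 < α) (C₁ C₂ : ℝ≥0∞)
    (hμν : μ ≪ ν) (hκ : ∀ x, κ x ≪ κ' x)
    (h₁ : ∫⁻ x, (μ.rnDeriv ν x) ^ α ∂ν ≤ C₁)
    (h₂ : ∀ x, ∫⁻ y, ((κ x).rnDeriv (κ' x) y) ^ α ∂(κ' x) ≤ C₂) :
    ∫⁻ z, ((μ ⊗ₘ κ).rnDeriv (ν ⊗ₘ κ') z) ^ α ∂(ν ⊗ₘ κ') ≤ C₁ * C₂ := by
  have hα0 : (0:ℝ) < α := by linarith
  have hα1 : (0:ℝ) ≤ α - 1 := by linarith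
  have hpq : α.HolderConjugate (α.conjExponent) := Real.HolderConjugate.conjExponent hα
  set q := α.conjExponent with hqdef
  have hq0 : 0 < q := hpq.symm.pos
  have hq_eq : (α - 1) * q = α := by
    have hne : α - 1 ≠ 0 := by linarith
    rw [hqdef, Real.conjExponent, mul_comm, div_mul_cancel₀ _ hne]
  have hPQ : μ ⊗ₘ κ ≪ ν ⊗ₘ κ' :=
    Measure.AbsolutelyContinuous.compProd hμν (Filter.Eventually.of_forall hκ)
  set h : A × B → ℝ≥0∞ := (μ ⊗ₘ κ).rnDeriv (ν ⊗ₘ κ') with hhdef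
  have hmeas : Measurable h := Measure.measurable_rnDeriv _ _
  have key : ∀ n : ℕ, ∫⁻ z, (min (h z) n) ^ α ∂(ν ⊗ₘ κ') ≤ C₁ * C₂ := by
    intro n
    set g : A × B → ℝ≥0∞ := fun z => min (h z) n with hgdef
    have hgmeas : Measurable g := hmeas.min measurable_const
    have hgαmeas : Measurable fun z => g z ^ α := hgmeas.pow_const _
    set φ : A × B → ℝ≥0∞ := fun z => g z ^ (α - 1) with hφdef
    have hφmeas : Measurable φ := hgmeas.pow_const _
    set I := ∫⁻ z, g z ^ α ∂(ν ⊗ₘ κ') with hIdef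
    have hIfin : I ≠ ∞ := by
      refine ne_top_of_le_ne_top ?_ (lintegral_mono (g := fun _ => (n : ℝ≥0∞) ^ α) fun z =>
        ENNReal.rpow_le_rpow (min_le_right _ _) hα0.le)
      rw [lintegral_const, measure_univ, mul_one]
      exact ENNReal.rpow_ne_top_of_nonneg hα0.le (by simp)
    -- step A
    have stepA : I ≤ ∫⁻ z, h z * φ z ∂(ν ⊗ₘ κ') := by
      refine lintegral_mono fun z => ?_
      calc g z ^ α = g z ^ (1 + (α-1)) := by norm_num
        _ = g z ^ (1:ℝ) * g z ^ (α-1) := ENNReal.rpow_add_of_nonneg _ _ zero_le_one hα1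
        _ = g z * φ z := by rw [ENNReal.rpow_one]
        _ ≤ h z * φ z := mul_le_mul_left (min_le_left _ _) _
    have stepB : ∫⁻ z, h z * φ z ∂(ν ⊗ₘ κ') = ∫⁻ z, φ z ∂(μ ⊗ₘ κ) :=
      lintegral_rnDeriv_mul hPQ hφmeas.aemeasurable
    have stepC : ∫⁻ z, φ z ∂(μ ⊗ₘ κ) = ∫⁻ x, ∫⁻ y, φ (x, y) ∂(κ x) ∂μ :=
      Measure.lintegral_compProd hφmeas
    have hinner_meas : Measurable fun x => ∫⁻ y, φ (x, y) ∂(κ x) :=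
      hφmeas.lintegral_kernel_prod_right'
    have stepD : ∫⁻ x, ∫⁻ y, φ (x, y) ∂(κ x) ∂μ
        = ∫⁻ x, μ.rnDeriv ν x * ∫⁻ y, φ (x, y) ∂(κ x) ∂ν :=
      (lintegral_rnDeriv_mul hμν hinner_meas.aemeasurable).symm
    set ψ : A → ℝ≥0∞ := fun x => ∫⁻ y, g (x, y) ^ α ∂(κ' x) with hψdef
    have hψmeas : Measurable ψ := hgαmeas.lintegral_kernel_prod_right'
    have fiber : ∀ x, ∫⁻ y, φ (x, y) ∂(κ x) ≤ C₂ ^ (1/α) * ψ x ^ (1/q) := by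
      intro x
      have h1 : ∫⁻ y, φ (x, y) ∂(κ x)
          = ∫⁻ y, (κ x).rnDeriv (κ' x) y * φ (x, y) ∂(κ' x) :=
        (lintegral_rnDeriv_mul (hκ x)
          (hφmeas.comp measurable_prodMk_left).aemeasurable).symm
      rw [h1]
      have holder := ENNReal.lintegral_mul_le_Lp_mul_Lq (κ' x) hpq
        (Measure.measurable_rnDeriv (κ x) (κ' x)).aemeasurable
        (show AEMeasurable (fun y => φ (x, y)) (κ' x) from
          (hφmeas.comp measurable_prodMk_left).aemeasurable)
      simp only [Pi.mul_apply] at holder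
      refine holder.trans ?_
      have hφq : ∀ y, φ (x, y) ^ q = g (x, y) ^ α := by
        intro y
        rw [hφdef, ← ENNReal.rpow_mul, hq_eq]
      rw [lintegral_congr hφq]
      gcongr
      · exact h₂ x
    have main : I ≤ (C₁ * C₂) ^ (1/α) * I ^ (1/q) := by
      have step1 : I ≤ ∫⁻ x, μ.rnDeriv ν x * (C₂ ^ (1/α) * ψ x ^ (1/q)) ∂ν := by
        refine (stepA.trans_eq (stepB.trans (stepC.trans stepD))).trans ?_
        exact lintegral_mono fun x => mul_le_mul_right (fiber x) _
      have step2 : ∫⁻ x, μ.rnDeriv ν x * (C₂ ^ (1/α) * ψ x ^ (1/q)) ∂ν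
          = C₂ ^ (1/α) * ∫⁻ x, μ.rnDeriv ν x * ψ x ^ (1/q) ∂ν := by
        rw [← lintegral_const_mul _ (show Measurable fun x => μ.rnDeriv ν x * ψ x ^ (1/q) from
          (Measure.measurable_rnDeriv μ ν).mul (hψmeas.pow_const _))]
        exact lintegral_congr fun x => by ring
      have holder2 := ENNReal.lintegral_mul_le_Lp_mul_Lq ν hpq
        (Measure.measurable_rnDeriv μ ν).aemeasurable
        ((hψmeas.pow_const (1/q)).aemeasurable)
      simp only [Pi.mul_apply] at holder2
      have hψq : ∀ x, (ψ x ^ (1/q)) ^ q = ψ x := by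
        intro x
        rw [← ENNReal.rpow_mul, one_div, inv_mul_cancel₀ hq0.ne', ENNReal.rpow_one]
      have hψint : ∫⁻ x, ψ x ∂ν = I := by
        rw [hIdef, Measure.lintegral_compProd hgαmeas]
      have step3 : ∫⁻ x, μ.rnDeriv ν x * ψ x ^ (1/q) ∂ν ≤ C₁ ^ (1/α) * I ^ (1/q) := by
        refine holder2.trans ?_
        rw [lintegral_congr hψq, hψint]
        gcongr
      calc I ≤ C₂ ^ (1/α) * ∫⁻ x, μ.rnDeriv ν x * ψ x ^ (1/q) ∂ν := step1.trans step2.le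
        _ ≤ C₂ ^ (1/α) * (C₁ ^ (1/α) * I ^ (1/q)) := mul_le_mul_right step3 _
        _ = (C₁ * C₂) ^ (1/α) * I ^ (1/q) := by
            rw [ENNReal.mul_rpow_of_nonneg _ _ (by positivity : (0:ℝ) ≤ 1/α)]
            ring
    exact ADP_cancel hpq hIfin main
  -- monotone convergence
  have hmono : Monotone fun n : ℕ => fun z => (min (h z) n) ^ α := by
    intro m n hmn
    exact fun z => ENNReal.rpow_le_rpow (min_le_min le_rfl (by exact_mod_cast hmn)) hα0.le
  calc ∫⁻ z, h z ^ α ∂(ν ⊗ₘ κ')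
      = ∫⁻ z, ⨆ n : ℕ, (min (h z) n) ^ α ∂(ν ⊗ₘ κ') := by
        exact lintegral_congr fun z => (ADP_sup_min_rpow α hα.le (h z)).symm
    _ = ⨆ n : ℕ, ∫⁻ z, (min (h z) n) ^ α ∂(ν ⊗ₘ κ') :=
        lintegral_iSup (fun n => (hmeas.min measurable_const).pow_const _) hmono
    _ ≤ C₁ * C₂ := iSup_le key

/-- Adaptive sequential composition for alpha differential privacy.
If the first mechanism's output laws `μ, ν` (on adjacent datasets) satisfy `(α, ε₁)`-ADP,
i.e. `∫ (dμ/dν)^α dν ≤ α(α−1)ε₁ + 1`, and the second (adaptive) mechanism, modelled as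
Markov kernels `κ, κ'`, satisfies `(α, ε₂)`-ADP for every first-stage output `x`, then the
joint law `μ ⊗ₘ κ` versus `ν ⊗ₘ κ'` satisfies `(α, ε₁ + ε₂ + α(α−1)ε₁ε₂)`-ADP, where the
alpha divergence is `D̃_α(P‖Q) = (∫ (dP/dQ)^α dQ − 1)/(α(α−1))`. -/
theorem adaptive_composition_ADP
    {A B : Type*} [MeasurableSpace A] [MeasurableSpace B]
    (μ ν : Measure A) [IsProbabilityMeasure μ] [IsProbabilityMeasure ν]
    (κ κ' : Kernel A B) [IsMarkovKernel κ] [IsMarkovKernel κ']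
    (α ε₁ ε₂ : ℝ) (hα : 1 < α) (hε₁ : 0 ≤ ε₁) (hε₂ : 0 ≤ ε₂)
    (hμν : μ ≪ ν) (hκ : ∀ x, κ x ≪ κ' x)
    (h₁ : ∫⁻ x, (μ.rnDeriv ν x) ^ α ∂ν ≤ ENNReal.ofReal (α * (α - 1) * ε₁ + 1))
    (h₂ : ∀ x, ∫⁻ y, ((κ x).rnDeriv (κ' x) y) ^ α ∂(κ' x)
        ≤ ENNReal.ofReal (α * (α - 1) * ε₂ + 1)) :
    ((∫⁻ z, ((μ ⊗ₘ κ).rnDeriv (ν ⊗ₘ κ') z) ^ α ∂(ν ⊗ₘ κ')) - 1)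
        / ENNReal.ofReal (α * (α - 1))
      ≤ ENNReal.ofReal (ε₁ + ε₂ + α * (α - 1) * ε₁ * ε₂) := by
  set a := α * (α - 1) with hadef
  have ha : 0 < a := by
    have : 0 < α - 1 := by linarith
    positivity
  set E := ε₁ + ε₂ + a * ε₁ * ε₂ with hEdef
  have hE : 0 ≤ E := by positivity
  have key := ADP_key μ ν κ κ' α hα _ _ hμν hκ h₁ h₂
  have hmul : ENNReal.ofReal (a * ε₁ + 1) * ENNReal.ofReal (a * ε₂ + 1)
      = ENNReal.ofReal (a * E) + 1 := by
    rw [← ENNReal.ofReal_mul (by positivity), ← ENNReal.ofReal_one,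
      ← ENNReal.ofReal_add (by positivity) zero_le_one]
    congr 1
    rw [hEdef]
    ring
  have hsub : (∫⁻ z, ((μ ⊗ₘ κ).rnDeriv (ν ⊗ₘ κ') z) ^ α ∂(ν ⊗ₘ κ')) - 1
      ≤ ENNReal.ofReal (a * E) := by
    have := tsub_le_tsub_right (key.trans_eq hmul) 1
    rwa [ENNReal.add_sub_cancel_right ENNReal.one_ne_top] at this
  refine (ENNReal.div_le_div_right hsub _).trans ?_
  rw [ENNReal.ofReal_mul ha.le, mul_comm, mul_div_assoc,
    ENNReal.div_self (by simp [ha]) ENNReal.ofReal_ne_top, mul_one]
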